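/- For all natural numbers n, m, ℓ, the identity ∑_{k=ℓ+1}^{m} C(m,k) · C(k−ℓ−1, n) = (1/n!) · (d^n/dx^n)[ ((x+2)^m − ∑_{k=0}^{ℓ} C(m,k)(x+1)^k) / (x+1)^{ℓ+1} ]|_{x=0} holds, where the right-hand side is the n-th iterated derivative at 0 of the real function x ↦ ((x+2)^m − ∑_{k=0}^{ℓ} C(m,k)(x+1)^k)/(x+1)^{ℓ+1} (which is smooth near x = 0 since the denominator equals 1 there). (This is the formula ζ_{ℓ+n+1>0}(n|m;ℓ) of Theorem 3.1, computing h^n(O_{P^{n|m}}(ℓ)) for ℓ ≥ 0; note that the coefficients in the subtracted sum are C(m,k).) -/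

import Mathlib

open Filter Topology

lemma sum_pow_iteratedDeriv (n : ℕ) :
    ∀ (c : ℕ → ℝ) (e : ℕ → ℕ) (s : Finset ℕ),
      iteratedDeriv n (fun x : ℝ => ∑ k ∈ s, c k * (x + 1) ^ (e k)) =
        fun x => ∑ k ∈ s, c k * ((e k).descFactorial n : ℝ) * (x + 1) ^ (e k - n) := by
  induction n with
  | zero => intro c e s; simp [mul_assoc]
  | succ n ih =>
    intro c e s
    rw [iteratedDeriv_succ']
    have hd : deriv (fun x : ℝ => ∑ k ∈ s, c k * (x + 1) ^ (e k)) =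
        fun x => ∑ k ∈ s, (c k * (e k : ℝ)) * (x + 1) ^ (e k - 1) := by
      funext x
      rw [deriv_fun_sum (fun k _ => (((differentiableAt_fun_id.add_const 1).fun_pow (e k)).const_mul (c k)))]
      refine Finset.sum_congr rfl fun k _ => ?_
      rw [deriv_const_mul _ ((differentiableAt_fun_id.add_const 1).fun_pow (e k)),
        deriv_fun_pow (differentiableAt_fun_id.add_const 1)]
      have : deriv (fun x : ℝ => x + 1) x = 1 := by
        simp [deriv_add_const]
      rw [this]
      ring
    rw [hd, ih (fun k => c k * (e k : ℝ)) (fun k => e k - 1) s]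
    funext x
    refine Finset.sum_congr rfl fun k _ => ?_
    have h1 : (e k : ℝ) * ((e k - 1).descFactorial n : ℝ) =
        ((e k).descFactorial (n + 1) : ℝ) := by
      rcases Nat.eq_zero_or_pos (e k) with h | h
      · simp [h]
      · obtain ⟨j, hj⟩ := Nat.exists_eq_succ_of_ne_zero (Nat.pos_iff_ne_zero.mp h)
        rw [hj]
        push_cast [Nat.succ_sub_one, Nat.succ_descFactorial_succ]
        ring
    have h2 : e k - 1 - n = e k - (n + 1) := by omega
    rw [h2, ← h1]
    ring

theorem stmt_3 (n m ℓ : ℕ) :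
    ((∑ k ∈ Finset.Icc (ℓ + 1) m, m.choose k * (k - ℓ - 1).choose n : ℕ) : ℝ) =
      (1 / (n.factorial : ℝ)) *
        iteratedDeriv n
          (fun x : ℝ =>
            ((x + 2) ^ m - ∑ k ∈ Finset.range (ℓ + 1), (m.choose k : ℝ) * (x + 1) ^ k) /
              (x + 1) ^ (ℓ + 1)) 0 := by
  set g : ℝ → ℝ := fun x => ∑ k ∈ Finset.Icc (ℓ + 1) m, (m.choose k : ℝ) * (x + 1) ^ (k - (ℓ + 1))
    with hg
  have hne : ∀ᶠ x in 𝓝 (0 : ℝ), x + 1 ≠ 0 := by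
    have : ContinuousAt (fun x : ℝ => x + 1) 0 := by fun_prop
    exact this.eventually_ne (by norm_num)
  have heq : (fun x : ℝ =>
      ((x + 2) ^ m - ∑ k ∈ Finset.range (ℓ + 1), (m.choose k : ℝ) * (x + 1) ^ k) /
        (x + 1) ^ (ℓ + 1)) =ᶠ[𝓝 (0 : ℝ)] g := by
    filter_upwards [hne] with x hx
    set M := max m ℓ with hM
    have hexp : (x + 2) ^ m = ∑ k ∈ Finset.range (M + 1), (m.choose k : ℝ) * (x + 1) ^ k := by
      have h1 : (x + 2) ^ m = ((x + 1) + 1) ^ m := by ring_nf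
      rw [h1, add_pow]
      rw [← Finset.sum_subset (Finset.range_subset_range.2 (by omega : m + 1 ≤ M + 1))]
      · refine Finset.sum_congr rfl fun k hk => ?_; ring
      · intro k hk hk'
        simp only [Finset.mem_range] at hk hk'
        have : m.choose k = 0 := Nat.choose_eq_zero_of_lt (by omega)
        simp [this]
    have hnum : (x + 2) ^ m - ∑ k ∈ Finset.range (ℓ + 1), (m.choose k : ℝ) * (x + 1) ^ k
        = g x * (x + 1) ^ (ℓ + 1) := by
      rw [hexp, ← Finset.sum_Ico_eq_sub _ (by omega : ℓ + 1 ≤ M + 1)]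
      have hIco : Finset.Ico (ℓ + 1) (M + 1) = Finset.Icc (ℓ + 1) M := rfl
      rw [hIco, hg]
      rw [Finset.sum_mul]
      rw [← Finset.sum_subset (Finset.Icc_subset_Icc_right (le_max_left m ℓ) :
          Finset.Icc (ℓ + 1) m ⊆ Finset.Icc (ℓ + 1) M)]
      · refine Finset.sum_congr rfl fun k hk => ?_
        simp only [Finset.mem_Icc] at hk
        rw [mul_assoc, ← pow_add, Nat.sub_add_cancel hk.1]
      · intro k hk hk'
        simp only [Finset.mem_Icc] at hk hk'
        have : m.choose k = 0 := Nat.choose_eq_zero_of_lt (by omega)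
        simp [this]
    rw [hnum, mul_div_assoc, div_self (pow_ne_zero _ hx), mul_one]
  rw [heq.iteratedDeriv_eq n, hg,
    sum_pow_iteratedDeriv n (fun k => (m.choose k : ℝ)) (fun k => k - (ℓ + 1))]
  push_cast
  rw [Finset.mul_sum]
  refine Finset.sum_congr rfl fun k hk => ?_
  have : ((k - (ℓ + 1)).descFactorial n : ℝ) = (n.factorial : ℝ) * ((k - (ℓ + 1)).choose n : ℝ) :=
    by rw [← Nat.cast_mul, Nat.descFactorial_eq_factorial_mul_choose]
  have hk2 : k - ℓ - 1 = k - (ℓ + 1) := by omega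
  rw [hk2]
  simp only [zero_add, one_pow, mul_one, this]
  have hf : (n.factorial : ℝ) ≠ 0 := by positivity
  field_simp
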